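/- Let A = (a_{ih}) be an n×n complex matrix such that Re(a_{ii}) + Σ_{h≠i} |a_{ih}| ≤ 0 for all i = 1,…,n. Then the semigroup generated by A is ℓ∞-contractive, i.e., ‖exp(tA) x‖_∞ ≤ ‖x‖_∞ for all t ≥ 0 and all x ∈ ℂⁿ. -/

import Mathlib

open Matrix Finset

/-- In a Banach algebra over `ℂ` with `‖1‖ = 1`, `‖exp B‖ ≤ exp ‖B‖`. -/
lemma aux_norm_exp_le_exp_norm {𝔸 : Type*} [NormedRing 𝔸] [NormedAlgebra ℂ 𝔸]
    [CompleteSpace 𝔸] [NormOneClass 𝔸] (B : 𝔸) :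
    ‖NormedSpace.exp B‖ ≤ Real.exp ‖B‖ := by
  rw [NormedSpace.exp_eq_tsum ℂ, Real.exp_eq_exp_ℝ, NormedSpace.exp_eq_tsum ℝ]
  refine (norm_tsum_le_tsum_norm (NormedSpace.norm_expSeries_summable' (𝕂 := ℂ) B)).trans
    (Summable.tsum_le_tsum ?_ (NormedSpace.norm_expSeries_summable' (𝕂 := ℂ) B)
      (NormedSpace.expSeries_summable' (𝕂 := ℝ) ‖B‖))
  intro k
  rw [norm_smul, smul_eq_mul]
  have h1 : ‖((Nat.factorial k : ℂ))⁻¹‖ = ((Nat.factorial k : ℝ))⁻¹ := by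
    rw [norm_inv]
    simp
  rw [h1]
  gcongr
  exact norm_pow_le B k

/-- If `Re(a_ii) + ∑_{h≠i} |a_ih| ≤ 0` for all `i`, then the semigroup generated by `A`
is `ℓ∞`-contractive: `‖exp(tA) x‖_∞ ≤ ‖x‖_∞` for all `t ≥ 0` and `x ∈ ℂⁿ`. -/
theorem stmt_0 (n : ℕ) (A : Matrix (Fin n) (Fin n) ℂ)
    (hA : ∀ i : Fin n, (A i i).re + ∑ h ∈ Finset.univ.erase i, ‖A i h‖ ≤ 0) :
    ∀ t : ℝ, 0 ≤ t → ∀ x : Fin n → ℂ,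
      ‖(NormedSpace.exp (t • A)).mulVec x‖ ≤ ‖x‖ := by
  intro t ht x
  rcases Nat.eq_zero_or_pos n with hn | hn
  · subst hn
    rw [Subsingleton.elim ((NormedSpace.exp (t • A)).mulVec x) x]
  haveI : Nonempty (Fin n) := Fin.pos_iff_nonempty.mp hn
  letI : SeminormedRing (Matrix (Fin n) (Fin n) ℂ) := Matrix.linftyOpSemiNormedRing
  letI : NormedRing (Matrix (Fin n) (Fin n) ℂ) := Matrix.linftyOpNormedRing
  letI : NormedAlgebra ℂ (Matrix (Fin n) (Fin n) ℂ) := Matrix.linftyOpNormedAlgebra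
  set R : ℝ := ‖A‖ with hR
  have hR0 : 0 ≤ R := norm_nonneg A
  -- row sums are bounded by R
  have hrow : ∀ i : Fin n, ∑ j, ‖A i j‖ ≤ R := by
    intro i
    have h1 : (∑ j, ‖A i j‖₊) ≤ ‖A‖₊ := by
      rw [Matrix.linfty_opNNNorm_def]
      exact Finset.le_sup (f := fun i => ∑ j, ‖A i j‖₊) (Finset.mem_univ i)
    calc ∑ j, ‖A i j‖ = ((∑ j, ‖A i j‖₊ : NNReal) : ℝ) := by
          rw [NNReal.coe_sum]
          simp
      _ ≤ ((‖A‖₊ : NNReal) : ℝ) := by exact_mod_cast h1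
      _ = R := rfl
  have hdiag : ∀ i : Fin n, ‖A i i‖ ≤ R := by
    intro i
    refine le_trans ?_ (hrow i)
    exact Finset.single_le_sum (f := fun j => ‖A i j‖) (fun j _ => norm_nonneg _)
      (Finset.mem_univ i)
  -- the key estimate for every m > 0
  have key : ∀ m : ℝ, 0 < m →
      ‖(NormedSpace.exp (t • A)).mulVec x‖ ≤ Real.exp (t * (R ^ 2 / (2 * m))) * ‖x‖ := by
    intro m hm
    set c : ℝ := R + m with hc
    set B : Matrix (Fin n) (Fin n) ℂ := A + c • (1 : Matrix (Fin n) (Fin n) ℂ) with hB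
    -- bound on the norm of B
    have hBrow : ∀ i : Fin n, ∑ j, ‖B i j‖ ≤ c + R ^ 2 / (2 * m) := by
      intro i
      have hsplit : ∑ j, ‖B i j‖ = ‖B i i‖ + ∑ j ∈ Finset.univ.erase i, ‖B i j‖ :=
        (Finset.add_sum_erase _ _ (Finset.mem_univ i)).symm
      have hBii : B i i = A i i + (c : ℂ) := by
        simp [hB, Matrix.one_apply]
      have hBij : ∀ j ∈ Finset.univ.erase i, ‖B i j‖ = ‖A i j‖ := by
        intro j hj
        have hji : j ≠ i := (Finset.mem_erase.mp hj).1
        simp [hB, Matrix.one_apply, (Ne.symm hji)]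
      have hre : -R ≤ (A i i).re := by
        have := Complex.abs_re_le_norm (A i i)
        have h2 : |(A i i).re| ≤ R := le_trans this (hdiag i)
        linarith [neg_le_of_abs_le h2]
      have him : (A i i).im ^ 2 ≤ R ^ 2 := by
        have h3 : |(A i i).im| ≤ R := le_trans (Complex.abs_im_le_norm (A i i)) (hdiag i)
        nlinarith [abs_nonneg (A i i).im, sq_abs (A i i).im]
      have hdiagbound : ‖A i i + (c : ℂ)‖ ≤ c + (A i i).re + R ^ 2 / (2 * m) := by
        have hb0 : 0 < c + (A i i).re := by simp only [hc]; linarith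
        have hsq : ‖A i i + (c : ℂ)‖ ^ 2 ≤ (c + (A i i).re + R ^ 2 / (2 * m)) ^ 2 := by
          have hnormsq : ‖A i i + (c : ℂ)‖ ^ 2 = ((A i i).re + c) ^ 2 + (A i i).im ^ 2 := by
            rw [Complex.sq_norm]
            simp [Complex.normSq_apply]
            ring
          rw [hnormsq]
          have hq : 0 ≤ R ^ 2 / (2 * m) := by positivity
          have hq2 : 2 * m * (R ^ 2 / (2 * m)) = R ^ 2 := by field_simp
          have hge : (0 : ℝ) ≤ c + (A i i).re - m := by simp only [hc]; linarith
          nlinarith [sq_nonneg (R ^ 2 / (2 * m)), mul_nonneg hge hq]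
        have hbpos : 0 ≤ c + (A i i).re + R ^ 2 / (2 * m) := by positivity
        nlinarith [norm_nonneg (A i i + (c : ℂ)), hsq, hbpos]
      calc ∑ j, ‖B i j‖ = ‖A i i + (c : ℂ)‖ + ∑ j ∈ Finset.univ.erase i, ‖A i j‖ := by
            rw [hsplit, hBii, Finset.sum_congr rfl hBij]
        _ ≤ (c + (A i i).re + R ^ 2 / (2 * m)) + ∑ j ∈ Finset.univ.erase i, ‖A i j‖ := by
            linarith [hdiagbound]
        _ ≤ c + R ^ 2 / (2 * m) := by linarith [hA i]
    have hBnorm : ‖B‖ ≤ c + R ^ 2 / (2 * m) := by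
      have hb : (0 : ℝ) ≤ c + R ^ 2 / (2 * m) := by positivity
      rw [Matrix.linfty_opNorm_def]
      rw [show (c + R ^ 2 / (2 * m)) = ((c + R ^ 2 / (2 * m)).toNNReal : ℝ) from
        (Real.coe_toNNReal _ hb).symm]
      rw [NNReal.coe_le_coe]
      refine Finset.sup_le fun i _ => ?_
      rw [← NNReal.coe_le_coe, Real.coe_toNNReal _ hb]
      push_cast
      exact hBrow i
    -- exp decomposition
    have hsplitA : t • A = t • B + (-(t * c)) • (1 : Matrix (Fin n) (Fin n) ℂ) := by
      rw [hB, smul_add, smul_smul, add_assoc, neg_smul, add_neg_cancel, add_zero]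
    have hcomm : Commute (t • B) ((-(t * c)) • (1 : Matrix (Fin n) (Fin n) ℂ)) :=
      ((Commute.one_right (t • B)).smul_right _)
    have hexp : NormedSpace.exp (t • A)
        = Complex.exp (↑(-(t * c))) • NormedSpace.exp (t • B) := by
      rw [hsplitA, Matrix.exp_add_of_commute _ _ hcomm]
      have h1 : ((-(t * c) : ℝ)) • (1 : Matrix (Fin n) (Fin n) ℂ)
          = algebraMap ℂ (Matrix (Fin n) (Fin n) ℂ) ((-(t * c) : ℝ) : ℂ) := by
        rw [Algebra.algebraMap_eq_smul_one, ← algebraMap_smul ℂ ((-(t * c) : ℝ))]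
        norm_num
      rw [h1]
      erw [← NormedSpace.algebraMap_exp_comm (𝕂 := ℂ) (𝔸 := Matrix (Fin n) (Fin n) ℂ)]
      rw [← Complex.exp_eq_exp_ℂ,
        Algebra.algebraMap_eq_smul_one, mul_smul_comm, mul_one]
    rw [hexp, Matrix.smul_mulVec, norm_smul]
    have habs : ‖Complex.exp (↑(-(t * c)) : ℂ)‖ = Real.exp (-(t * c)) := by
      rw [Complex.norm_exp_ofReal]
    rw [habs]
    have h2 : ‖(NormedSpace.exp (t • B)).mulVec x‖
        ≤ Real.exp (t * (c + R ^ 2 / (2 * m))) * ‖x‖ := by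
      refine le_trans (Matrix.linfty_opNorm_mulVec _ _) ?_
      have h3 : ‖NormedSpace.exp (t • B)‖ ≤ Real.exp (t * (c + R ^ 2 / (2 * m))) := by
        refine le_trans (aux_norm_exp_le_exp_norm _) ?_
        apply Real.exp_le_exp.mpr
        rw [norm_smul, Real.norm_of_nonneg ht]
        exact mul_le_mul_of_nonneg_left hBnorm ht
      exact mul_le_mul_of_nonneg_right h3 (norm_nonneg x)
    calc Real.exp (-(t * c)) * ‖(NormedSpace.exp (t • B)).mulVec x‖
        ≤ Real.exp (-(t * c)) * (Real.exp (t * (c + R ^ 2 / (2 * m))) * ‖x‖) := by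
          exact mul_le_mul_of_nonneg_left h2 (Real.exp_pos _).le
      _ = Real.exp (t * (R ^ 2 / (2 * m))) * ‖x‖ := by
          rw [← mul_assoc, ← Real.exp_add]
          ring_nf
  -- pass to the limit m → ∞
  have hlim : Filter.Tendsto (fun m : ℝ => Real.exp (t * (R ^ 2 / (2 * m))) * ‖x‖)
      Filter.atTop (nhds (‖x‖)) := by
    have h1 : Filter.Tendsto (fun m : ℝ => t * (R ^ 2 / (2 * m))) Filter.atTop (nhds 0) := by
      have h2 : Filter.Tendsto (fun m : ℝ => (t * R ^ 2 / 2) / m) Filter.atTop (nhds 0) :=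
        Filter.Tendsto.div_atTop tendsto_const_nhds Filter.tendsto_id
      refine h2.congr fun m => ?_
      ring
    have h3 : Filter.Tendsto (fun m : ℝ => Real.exp (t * (R ^ 2 / (2 * m))))
        Filter.atTop (nhds 1) := by
      have := (Real.continuous_exp.tendsto 0).comp h1
      simpa [Function.comp_def] using this
    have := h3.mul_const (‖x‖)
    simpa using this
  refine ge_of_tendsto hlim ?_
  filter_upwards [Filter.eventually_gt_atTop (0 : ℝ)] with m hm
  exact key m hm
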